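/- Let t > 1. There exists a point (w₁,w₂,w₃,w₄) ∈ ℂ⁴ satisfying w₁w₂ + w₃w₄ = 1, |w₁|² + |w₂|² + |w₃|² + |w₄|² = 2t, and 6i·w₃²w₄² − (2+6i)·w₃w₄ + 1 = 0, if and only if t ≥ 2/√3. (Consequently, for t < √((2+√2)/3) < 2/√3 the discriminant of the fiber quadratic is nonzero at every point of M_t³, so every fiber of F over F(M_t³) meeting M_t³ consists of exactly three points.) -/

import Mathlib

open Complex

/-- For `t > 1`, there is a point of `M_t³` (in the `w`-coordinates) where the
discriminant `6i·w₃²w₄² − (2+6i)·w₃w₄ + 1` of the fiber quadratic vanishes iff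
`t ≥ 2/√3`. -/
theorem stmt_19 (t : ℝ) (ht : 1 < t) :
    (∃ w₁ w₂ w₃ w₄ : ℂ,
        w₁ * w₂ + w₃ * w₄ = 1 ∧
        ‖w₁‖ ^ 2 + ‖w₂‖ ^ 2 + ‖w₃‖ ^ 2 + ‖w₄‖ ^ 2 =
          2 * t ∧
        6 * Complex.I * w₃ ^ 2 * w₄ ^ 2 - (2 + 6 * Complex.I) * (w₃ * w₄) + 1 = 0) ↔
      2 / Real.sqrt 3 ≤ t := by
  have hs3pos : (0:ℝ) < Real.sqrt 3 := Real.sqrt_pos.mpr (by norm_num)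
  have hs3sq : Real.sqrt 3 ^ 2 = 3 := Real.sq_sqrt (by norm_num)
  constructor
  · rintro ⟨w₁, w₂, w₃, w₄, h1, h2, h3⟩
    set z := w₃ * w₄ with hz
    set x := z.re with hx
    set y := z.im with hy
    have hz2 : z = (x:ℂ) + y*I := (Complex.re_add_im z).symm
    have h3' : 6*I*((x:ℂ)+y*I)^2 - (2+6*I)*((x:ℂ)+y*I) + 1 = 0 := by
      rw [← hz2, hz]; linear_combination h3
    rw [Complex.ext_iff] at h3'
    simp [Complex.mul_re, Complex.mul_im, pow_two] at h3'
    obtain ⟨hre, him⟩ := h3'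
    ring_nf at hre him
    -- derive y = -1/6 and 36x² - 36x + 1 = 0
    have hcase : (6*y + 1) * (1 - 2*x) = 0 := by linear_combination hre
    have hy6 : y = -(1/6) := by
      rcases mul_eq_zero.mp hcase with h | h
      · linarith
      · exfalso; nlinarith [him, sq_nonneg (y + 1/6)]
    rw [hy6] at him
    have hxeq : 36*x^2 - 36*x + 1 = 0 := by linear_combination 6*him
    -- normSq facts
    have hnz : ‖z‖ ^ 2 = x := by
      rw [Complex.sq_norm, Complex.normSq_apply, ← hx, ← hy, hy6]
      linear_combination (1/36)*hxeq
    have hnz1 : ‖1 - z‖ ^ 2 = 1 - x := by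
      rw [Complex.sq_norm, Complex.normSq_apply]
      simp [← hx, ← hy, hy6]
      linear_combination (1/36)*hxeq
    set a := ‖z‖ with ha
    set b := ‖1 - z‖ with hb
    have hapos : 0 ≤ a := norm_nonneg _
    have hbpos : 0 ≤ b := norm_nonneg _
    have hab : a * b = 1/6 := by
      have h := sq_eq_sq₀ (mul_nonneg hapos hbpos) (by norm_num : (0:ℝ) ≤ 1/6)
      apply h.mp
      rw [mul_pow, hnz, hnz1]; linear_combination (-1/36)*hxeq
    have habsum : (a + b)^2 = 4/3 := by linear_combination hnz + hnz1 + 2*hab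
    -- t ≥ a + b
    have hw12 : w₁ * w₂ = 1 - z := by linear_combination h1
    have habs12 : ‖w₁‖ * ‖w₂‖ = b := by
      rw [hb, ← hw12, norm_mul]
    have habs34 : ‖w₃‖ * ‖w₄‖ = a := by
      rw [ha, hz, norm_mul]
    have i1 : 2*b ≤ ‖w₁‖ ^ 2 + ‖w₂‖ ^ 2 := by
      nlinarith [sq_nonneg (‖w₁‖ - ‖w₂‖), habs12]
    have i2 : 2*a ≤ ‖w₃‖ ^ 2 + ‖w₄‖ ^ 2 := by
      nlinarith [sq_nonneg (‖w₃‖ - ‖w₄‖), habs34]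
    have htab : a + b ≤ t := by linarith [h2]
    have h23 : 2 / Real.sqrt 3 = a + b := by
      have h1 : (2 / Real.sqrt 3)^2 = (a+b)^2 := by
        rw [habsum, div_pow, hs3sq]; norm_num
      exact (sq_eq_sq₀ (by positivity) (by linarith)).mp h1
    linarith
  · intro htt
    obtain ⟨s2, hs2def⟩ : ∃ x, x = Real.sqrt 2 := ⟨_, rfl⟩
    have hs2 : s2^2 = 2 := by rw [hs2def]; exact Real.sq_sqrt (by norm_num)
    have hs2pos : 0 < s2 := by rw [hs2def]; exact Real.sqrt_pos.mpr (by norm_num)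
    have hs2lt : s2 < 3/2 := by nlinarith
    obtain ⟨a, hadef⟩ : ∃ x, x = Real.sqrt ((3+2*s2)/6) := ⟨_, rfl⟩
    obtain ⟨b, hbdef⟩ : ∃ x, x = Real.sqrt ((3-2*s2)/6) := ⟨_, rfl⟩
    have ha2 : a^2 = (3+2*s2)/6 := by rw [hadef]; exact Real.sq_sqrt (by nlinarith)
    have hb2 : b^2 = (3-2*s2)/6 := by rw [hbdef]; exact Real.sq_sqrt (by nlinarith)
    have hapos : 0 < a := by rw [hadef]; exact Real.sqrt_pos.mpr (by nlinarith)
    have hbpos : 0 < b := by rw [hbdef]; exact Real.sqrt_pos.mpr (by nlinarith)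
    have hab : a * b = 1/6 := by
      apply (sq_eq_sq₀ (by positivity) (by norm_num : (0:ℝ) ≤ 1/6)).mp
      rw [mul_pow, ha2, hb2]; linear_combination (-1/9)*hs2
    have habsum : a + b = 2 / Real.sqrt 3 := by
      apply (sq_eq_sq₀ (by positivity) (by positivity)).mp
      rw [div_pow, hs3sq]; linear_combination ha2 + hb2 + 2*hab
    have htab : a + b ≤ t := habsum ▸ htt
    -- the root z
    obtain ⟨z, hzdef⟩ : ∃ z : ℂ, z = ((((3+2*s2)/6 : ℝ)) : ℂ) - (1/6 : ℝ) * I := ⟨_, rfl⟩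
    have hzre : z.re = (3+2*s2)/6 := by rw [hzdef]; simp
    have hzim : z.im = -(1/6) := by rw [hzdef]; simp
    have hc : ((s2:ℝ):ℂ)^2 = 2 := by
      rw [← Complex.ofReal_pow, hs2]; norm_num
    have hquad : 6*I*z^2 - (2+6*I)*z + 1 = 0 := by
      rw [hzdef]
      push_cast
      linear_combination (2*I/3) * hc + ((I - 4*((s2:ℝ):ℂ))/6) * Complex.I_sq
    have hnz : Complex.normSq z = a^2 := by
      rw [Complex.normSq_apply, hzre, hzim, ha2]; linear_combination (1/9)*hs2
    have hnz1 : Complex.normSq (1 - z) = b^2 := by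
      rw [Complex.normSq_apply, Complex.sub_re, Complex.sub_im, hzre, hzim,
        Complex.one_re, Complex.one_im, hb2]
      linear_combination (1/9)*hs2
    -- the radii
    have htb : b ≤ t - a := by linarith
    obtain ⟨d, hddef⟩ : ∃ x, x = Real.sqrt ((t-a)^2 - b^2) := ⟨_, rfl⟩
    have hb2le : b^2 ≤ (t-a)^2 := pow_le_pow_left₀ hbpos.le htb 2
    have hd2 : d^2 = (t-a)^2 - b^2 := by rw [hddef]; exact Real.sq_sqrt (by linarith)
    have hdpos : 0 ≤ d := by rw [hddef]; exact Real.sqrt_nonneg _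
    obtain ⟨ρ, hrhodef⟩ : ∃ x, x = (t - a) + d := ⟨_, rfl⟩
    have hrhopos : 0 < ρ := by rw [hrhodef]; linarith
    have hrhoeq : ρ^2 + b^2 = 2*(t-a)*ρ := by rw [hrhodef]; linear_combination hd2
    obtain ⟨r, hrdef⟩ : ∃ x, x = Real.sqrt ρ := ⟨_, rfl⟩
    have hr2 : r^2 = ρ := by rw [hrdef]; exact Real.sq_sqrt hrhopos.le
    have hrpos : 0 < r := by rw [hrdef]; exact Real.sqrt_pos.mpr hrhopos
    obtain ⟨sa, hsadef⟩ : ∃ x, x = Real.sqrt a := ⟨_, rfl⟩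
    have hsa2 : sa^2 = a := by rw [hsadef]; exact Real.sq_sqrt hapos.le
    have hsapos : 0 < sa := by rw [hsadef]; exact Real.sqrt_pos.mpr hapos
    have hrne : (r:ℂ) ≠ 0 := Complex.ofReal_ne_zero.mpr hrpos.ne'
    have hsane : (sa:ℂ) ≠ 0 := Complex.ofReal_ne_zero.mpr hsapos.ne'
    refine ⟨(r:ℂ), (1-z)/(r:ℂ), (sa:ℂ), z/(sa:ℂ), ?_, ?_, ?_⟩
    · field_simp
      ring
    · have e1 : ‖(r:ℂ)‖ ^ 2 = ρ := by
        rw [Complex.sq_norm, Complex.normSq_ofReal]; linear_combination hr2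
      have e2 : ‖(1-z)/(r:ℂ)‖ ^ 2 = b^2 / ρ := by
        rw [Complex.sq_norm, Complex.normSq_div, hnz1, Complex.normSq_ofReal]
        congr 1; linear_combination hr2
      have e3 : ‖(sa:ℂ)‖ ^ 2 = a := by
        rw [Complex.sq_norm, Complex.normSq_ofReal]; linear_combination hsa2
      have e4 : ‖z/(sa:ℂ)‖ ^ 2 = a := by
        rw [Complex.sq_norm, Complex.normSq_div, hnz, Complex.normSq_ofReal]
        rw [show sa * sa = a by linear_combination hsa2, sq, mul_div_assoc,
          div_self hapos.ne', mul_one]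
      have key : b^2/ρ = 2*t - 2*a - ρ := by
        rw [div_eq_iff hrhopos.ne']; linear_combination hrhoeq
      rw [e1, e2, e3, e4, key]; ring
    · have hw : (sa:ℂ) * (z/(sa:ℂ)) = z := by
        rw [mul_comm]; exact div_mul_cancel₀ z hsane
      calc 6*I*(sa:ℂ)^2*(z/(sa:ℂ))^2 - (2+6*I)*((sa:ℂ)*(z/(sa:ℂ))) + 1
          = 6*I*((sa:ℂ)*(z/(sa:ℂ)))^2 - (2+6*I)*((sa:ℂ)*(z/(sa:ℂ))) + 1 := by ring
        _ = 6*I*z^2 - (2+6*I)*z + 1 := by rw [hw]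
        _ = 0 := hquad
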